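/- (Whitney factorization pointwise bounds.) Let (α₁,α₂) be consistent Whitney parameters, W* the Whitney box with parameters (α₁(1+√α₂)⁻¹, √α₂), W** the one with parameters (α₁[2(1+√α₂)α₂^{1/4}]⁻¹, α₂^{1/4}), and W the one with (α₁,α₂). Let 0 < r < ∞ and u ∈ L^r_loc(ℝ^{n+1}_+), u ≥ 0, and set v(y,t) = (|W*(y,t)|⁻¹ ∫∫_{W*(y,t)} u^r)^{1/r}. Then for all (y,t): (i) sup_{(z,s)∈W*(y,t)} v(z,s) ≤ C · (|W(y,t)|⁻¹ ∫∫_{W(y,t)} u^r)^{1/r}, and (ii) inf_{(z,s)∈W**(y,t)} v(z,s) ≥ c · (|W**(y,t)|⁻¹ ∫∫_{W**(y,t)} u^r)^{1/r}, with constants C, c > 0 depending only on n, r, α₁, α₂. -/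

import Mathlib

open MeasureTheory Metric Set

/-- The Whitney box with parameters (β₁, β₂) at the point q = (y,t). -/
def whitneyBox (n : ℕ) (β₁ β₂ : ℝ) (q : EuclideanSpace ℝ (Fin n) × ℝ) :
    Set (EuclideanSpace ℝ (Fin n) × ℝ) :=
  {p | dist p.1 q.1 < β₁ * q.2 ∧ β₂⁻¹ * q.2 < p.2 ∧ p.2 < β₂ * q.2}

/-- The L^r Whitney average over the (β₁,β₂)-Whitney box at p. -/
noncomputable def whitneyAvg (n : ℕ) (β₁ β₂ r : ℝ)
    (u : EuclideanSpace ℝ (Fin n) × ℝ → ENNReal)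
    (p : EuclideanSpace ℝ (Fin n) × ℝ) : ENNReal :=
  ((volume (whitneyBox n β₁ β₂ p))⁻¹ * ∫⁻ w in whitneyBox n β₁ β₂ p, u w ^ r) ^ (1/r)

lemma whitneyBox_eq_prod (n : ℕ) (β₁ β₂ : ℝ) (y : EuclideanSpace ℝ (Fin n)) (t : ℝ) :
    whitneyBox n β₁ β₂ (y, t) = ball y (β₁ * t) ×ˢ Ioo (β₂⁻¹ * t) (β₂ * t) := by
  ext ⟨z, s⟩
  simp [whitneyBox, and_assoc]

lemma volume_whitneyBox (n : ℕ) (β₁ β₂ : ℝ) (y : EuclideanSpace ℝ (Fin n)) (t : ℝ)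
    (h : 0 < β₁ * t) :
    volume (whitneyBox n β₁ β₂ (y, t)) =
      volume (ball (0 : EuclideanSpace ℝ (Fin n)) 1) *
        ENNReal.ofReal ((β₁ * t) ^ n * (β₂ * t - β₂⁻¹ * t)) := by
  rw [whitneyBox_eq_prod, Measure.volume_eq_prod, Measure.prod_prod,
    Measure.addHaar_ball_of_pos _ _ h, finrank_euclideanSpace_fin, Real.volume_Ioo,
    ENNReal.ofReal_mul (by positivity)]
  ring

lemma avg_le_avg {X : Type*} [MeasureSpace X] (f : X → ENNReal) {S T : Set X}
    (hST : S ⊆ T) {K : ENNReal} (hS0 : volume S ≠ 0) (hStop : volume S ≠ ⊤)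
    (hT0 : volume T ≠ 0) (hTtop : volume T ≠ ⊤) (hK : volume T ≤ K * volume S) :
    (volume S)⁻¹ * ∫⁻ x in S, f x ≤ K * ((volume T)⁻¹ * ∫⁻ x in T, f x) := by
  calc (volume S)⁻¹ * ∫⁻ x in S, f x
      ≤ (volume S)⁻¹ * ∫⁻ x in T, f x := by gcongr
    _ = (volume S)⁻¹ * (volume T * ((volume T)⁻¹ * ∫⁻ x in T, f x)) := by
        conv_rhs => rw [← mul_assoc (volume T), ENNReal.mul_inv_cancel hT0 hTtop, one_mul]
    _ ≤ (volume S)⁻¹ * ((K * volume S) * ((volume T)⁻¹ * ∫⁻ x in T, f x)) := by gcongr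
    _ = (K * ((volume S)⁻¹ * volume S)) * ((volume T)⁻¹ * ∫⁻ x in T, f x) := by ring
    _ = K * ((volume T)⁻¹ * ∫⁻ x in T, f x) := by
        rw [ENNReal.inv_mul_cancel hS0 hStop, mul_one]

lemma key_ineq (n : ℕ) {c d T U : ℝ} (hc : 0 ≤ c) (hd : 0 ≤ d) (hT : 0 ≤ T)
    (hTU : T ≤ U) : (c * T) ^ n * (d * T) ≤ (c * U) ^ n * (d * U) := by
  have hU : 0 ≤ U := hT.trans hTU
  exact mul_le_mul (pow_le_pow_left₀ (by positivity) (mul_le_mul_of_nonneg_left hTU hc) n)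
    (mul_le_mul_of_nonneg_left hTU hd) (by positivity) (by positivity)

/-- Whitney factorization pointwise bounds: with
α₁* = α₁(1+√α₂)⁻¹, α₂* = √α₂, α₁** = α₁[2(1+√α₂)α₂^{1/4}]⁻¹, α₂** = α₂^{1/4},
and v = L^r average of u over W*, one has
sup_{W*(y,t)} v ≤ C (avg_{W(y,t)} u^r)^{1/r} and
inf_{W**(y,t)} v ≥ c (avg_{W**(y,t)} u^r)^{1/r}. -/
theorem whitney_factorization_bounds (n : ℕ) (α₁ α₂ r : ℝ)
    (h1 : 0 < α₁) (h2 : α₁ < α₂⁻¹) (h3 : α₂⁻¹ < 1) (hr : 0 < r) :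
    ∃ C c : ENNReal, 0 < c ∧ C ≠ ⊤ ∧
      ∀ u : EuclideanSpace ℝ (Fin n) × ℝ → ENNReal, Measurable u →
        ∀ (y : EuclideanSpace ℝ (Fin n)) (t : ℝ), 0 < t →
          (∀ p ∈ whitneyBox n (α₁ * (1 + Real.sqrt α₂)⁻¹) (Real.sqrt α₂) (y, t),
            whitneyAvg n (α₁ * (1 + Real.sqrt α₂)⁻¹) (Real.sqrt α₂) r u p ≤
              C * whitneyAvg n α₁ α₂ r u (y, t)) ∧
          (∀ p ∈ whitneyBox n (α₁ * (2 * (1 + Real.sqrt α₂) * α₂ ^ ((1:ℝ)/4))⁻¹)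
              (α₂ ^ ((1:ℝ)/4)) (y, t),
            c * whitneyAvg n (α₁ * (2 * (1 + Real.sqrt α₂) * α₂ ^ ((1:ℝ)/4))⁻¹)
                (α₂ ^ ((1:ℝ)/4)) r u (y, t) ≤
              whitneyAvg n (α₁ * (1 + Real.sqrt α₂)⁻¹) (Real.sqrt α₂) r u p) := by
  have hα₂inv : 0 < α₂⁻¹ := lt_trans h1 h2
  have hα₂0 : 0 < α₂ := inv_pos.mp hα₂inv
  have hα₂ : 1 < α₂ := by nlinarith [mul_inv_cancel₀ (ne_of_gt hα₂0)]
  set a : ℝ := Real.sqrt α₂ with ha_def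
  set b : ℝ := α₂ ^ ((1:ℝ)/4) with hb_def
  have haa : a * a = α₂ := Real.mul_self_sqrt hα₂0.le
  have ha0 : 0 < a := Real.sqrt_pos.mpr hα₂0
  have ha1 : 1 < a := by
    rw [ha_def, show (1:ℝ) = Real.sqrt 1 from Real.sqrt_one.symm]
    exact Real.sqrt_lt_sqrt (by norm_num) hα₂
  have hb0 : 0 < b := Real.rpow_pos_of_pos hα₂0 _
  have hbb : b * b = a := by
    rw [hb_def, ha_def, ← Real.rpow_add hα₂0, Real.sqrt_eq_rpow]
    norm_num
  have hb1 : 1 < b := (Real.one_lt_rpow_iff_of_pos hα₂0).mpr (Or.inl ⟨hα₂, by norm_num⟩)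
  have hainv : a⁻¹ < 1 := inv_lt_one_of_one_lt₀ ha1
  have hbinv : b⁻¹ < 1 := inv_lt_one_of_one_lt₀ hb1
  have hone_a : (0:ℝ) < 1 + a := by linarith
  set α₁s : ℝ := α₁ * (1 + a)⁻¹ with hα₁s_def
  set α₁ss : ℝ := α₁ * (2 * (1 + a) * b)⁻¹ with hα₁ss_def
  have hα₁s0 : 0 < α₁s := by positivity
  have hα₁ss0 : 0 < α₁ss := by positivity
  have hrel1 : (1 + a) * α₁s = α₁ := by rw [hα₁s_def]; field_simp
  have haa_sub : 0 < a - a⁻¹ := by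
    have : a⁻¹ < a := lt_trans hainv ha1
    linarith
  have hbb_sub : 0 < b - b⁻¹ := by
    have : b⁻¹ < b := lt_trans hbinv hb1
    linarith
  have hα₂sub : 0 < α₂ - α₂⁻¹ := by linarith
  have hcancel : ∀ c d e : ℝ, d ≠ 0 → c / d * (d * e) = c * e := by
    intro c d e hd
    field_simp
  set K1 : ℝ := (a * (1 + a)) ^ n * ((α₂ - α₂⁻¹) * a / (a - a⁻¹)) with hK1_def
  set K2 : ℝ := (2 * b ^ 2) ^ n * ((a - a⁻¹) * b / (b - b⁻¹)) with hK2_def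
  have hK1pos : 0 < K1 :=
    mul_pos (pow_pos (by positivity) n) (div_pos (mul_pos hα₂sub ha0) haa_sub)
  have hK2pos : 0 < K2 :=
    mul_pos (pow_pos (by positivity) n) (div_pos (mul_pos haa_sub hb0) hbb_sub)
  set Bvol : ENNReal := volume (ball (0 : EuclideanSpace ℝ (Fin n)) 1) with hBvol
  have hBvol0 : Bvol ≠ 0 := (measure_ball_pos _ _ one_pos).ne'
  have hBvoltop : Bvol ≠ ⊤ := measure_ball_lt_top.ne
  refine ⟨(ENNReal.ofReal K1) ^ (1/r), ((ENNReal.ofReal K2) ^ (1/r))⁻¹, ?_, ?_, ?_⟩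
  · rw [ENNReal.inv_pos]
    exact ENNReal.rpow_ne_top_of_nonneg (by positivity) ENNReal.ofReal_ne_top
  · exact ENNReal.rpow_ne_top_of_nonneg (by positivity) ENNReal.ofReal_ne_top
  intro u _ y t ht
  have volpos : ∀ (β₁ β₂ : ℝ) (z : EuclideanSpace ℝ (Fin n)) (s : ℝ), 0 < β₁ → 0 < s →
      1 < β₂ → volume (whitneyBox n β₁ β₂ (z, s)) ≠ 0 ∧
        volume (whitneyBox n β₁ β₂ (z, s)) ≠ ⊤ := by
    intro β₁ β₂ z s hβ₁ hs hβ₂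
    have hβ₂0 : 0 < β₂ := lt_trans one_pos hβ₂
    have hβinv : β₂⁻¹ < β₂ := lt_trans (inv_lt_one_of_one_lt₀ hβ₂) hβ₂
    rw [volume_whitneyBox n β₁ β₂ z s (by positivity)]
    constructor
    · refine mul_ne_zero hBvol0 ?_
      have hsub : 0 < β₂ * s - β₂⁻¹ * s := by nlinarith
      exact (ENNReal.ofReal_pos.mpr (by positivity)).ne'
    · exact ENNReal.mul_ne_top hBvoltop ENNReal.ofReal_ne_top
  constructor
  · -- part (i)
    rintro ⟨z, s⟩ hp
    obtain ⟨hpz, hps1, hps2⟩ := hp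
    have hpz' : dist z y < α₁s * t := hpz
    have hps1' : a⁻¹ * t < s := hps1
    have hps2' : s < a * t := hps2
    have hs0 : 0 < s := lt_trans (by positivity) hps1'
    have hincl : whitneyBox n α₁s a (z, s) ⊆ whitneyBox n α₁ α₂ (y, t) := by
      rintro ⟨w, τ⟩ hw'
      obtain ⟨hw, hτ1, hτ2⟩ := hw'
      have hw : dist w z < α₁s * s := hw
      have hτ1 : a⁻¹ * s < τ := hτ1
      have hτ2 : τ < a * s := hτ2
      refine ⟨?_, ?_, ?_⟩
      · show dist w y < α₁ * t
        calc dist w y ≤ dist w z + dist z y := dist_triangle _ _ _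
          _ < α₁s * s + α₁s * t := by linarith
          _ ≤ α₁s * (a * t) + α₁s * t :=
              add_le_add_left (mul_le_mul_of_nonneg_left hps2'.le hα₁s0.le) _
          _ = α₁ * t := by rw [← hrel1]; ring
      · show α₂⁻¹ * t < τ
        have h1' : α₂⁻¹ * t = a⁻¹ * (a⁻¹ * t) := by rw [← haa, mul_inv]; ring
        rw [h1']
        calc a⁻¹ * (a⁻¹ * t) < a⁻¹ * s :=
              mul_lt_mul_of_pos_left hps1' (inv_pos.mpr ha0)
          _ < τ := hτ1
      · show τ < α₂ * t
        calc τ < a * s := hτ2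
          _ < a * (a * t) := mul_lt_mul_of_pos_left hps2' ha0
          _ = α₂ * t := by rw [← haa]; ring
    have hts : t ≤ a * s := by
      have e : a * (a⁻¹ * t) = t := by field_simp
      calc t = a * (a⁻¹ * t) := e.symm
        _ ≤ a * s := mul_le_mul_of_nonneg_left hps1'.le ha0.le
    have hRHS : K1 * ((α₁s * s) ^ n * (a * s - a⁻¹ * s)) =
        (α₁ * (a * s)) ^ n * ((α₂ - α₂⁻¹) * (a * s)) := by
      have hdiv : (α₂ - α₂⁻¹) * a / (a - a⁻¹) * ((a - a⁻¹) * s) =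
          (α₂ - α₂⁻¹) * (a * s) := by
        rw [hcancel _ _ _ (ne_of_gt haa_sub)]; ring
      calc K1 * ((α₁s * s) ^ n * (a * s - a⁻¹ * s))
          = (a * (1 + a)) ^ n * (α₁s * s) ^ n *
              ((α₂ - α₂⁻¹) * a / (a - a⁻¹) * ((a - a⁻¹) * s)) := by
            rw [hK1_def]; ring
        _ = ((a * (1 + a)) * (α₁s * s)) ^ n * ((α₂ - α₂⁻¹) * (a * s)) := by
            rw [hdiv, ← mul_pow]
        _ = (α₁ * (a * s)) ^ n * ((α₂ - α₂⁻¹) * (a * s)) := by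
            rw [show a * (1 + a) * (α₁s * s) = α₁ * (a * s) from by
              rw [← hrel1]; ring]
    have hreal : (α₁ * t) ^ n * (α₂ * t - α₂⁻¹ * t) ≤
        K1 * ((α₁s * s) ^ n * (a * s - a⁻¹ * s)) := by
      rw [show (α₁ * t) ^ n * (α₂ * t - α₂⁻¹ * t) =
        (α₁ * t) ^ n * ((α₂ - α₂⁻¹) * t) from by ring, hRHS]
      exact key_ineq n h1.le hα₂sub.le ht.le hts
    have hvol : volume (whitneyBox n α₁ α₂ (y, t)) ≤
        ENNReal.ofReal K1 * volume (whitneyBox n α₁s a (z, s)) := by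
      calc volume (whitneyBox n α₁ α₂ (y, t))
          = Bvol * ENNReal.ofReal ((α₁ * t) ^ n * (α₂ * t - α₂⁻¹ * t)) :=
            volume_whitneyBox n α₁ α₂ y t (by positivity)
        _ ≤ Bvol * ENNReal.ofReal (K1 * ((α₁s * s) ^ n * (a * s - a⁻¹ * s))) :=
            mul_le_mul_right (ENNReal.ofReal_le_ofReal hreal) _
        _ = ENNReal.ofReal K1 *
            (Bvol * ENNReal.ofReal ((α₁s * s) ^ n * (a * s - a⁻¹ * s))) := by
            rw [ENNReal.ofReal_mul hK1pos.le]; ring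
        _ = ENNReal.ofReal K1 * volume (whitneyBox n α₁s a (z, s)) := by
            rw [volume_whitneyBox n α₁s a z s (by positivity)]
    have hS := volpos α₁s a z s hα₁s0 hs0 ha1
    have hT := volpos α₁ α₂ y t h1 ht hα₂
    have hmain := avg_le_avg (fun w => u w ^ r) hincl hS.1 hS.2 hT.1 hT.2 hvol
    calc whitneyAvg n α₁s a r u (z, s)
        ≤ (ENNReal.ofReal K1 *
            ((volume (whitneyBox n α₁ α₂ (y, t)))⁻¹ *
              ∫⁻ w in whitneyBox n α₁ α₂ (y, t), u w ^ r)) ^ (1/r) :=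
          ENNReal.rpow_le_rpow hmain (by positivity)
      _ = (ENNReal.ofReal K1) ^ (1/r) * whitneyAvg n α₁ α₂ r u (y, t) := by
          rw [whitneyAvg, ENNReal.mul_rpow_of_nonneg _ _ (by positivity)]
  · -- part (ii)
    rintro ⟨z, s⟩ hp
    obtain ⟨hpz, hps1, hps2⟩ := hp
    have hpz' : dist z y < α₁ss * t := hpz
    have hps1' : b⁻¹ * t < s := hps1
    have hps2' : s < b * t := hps2
    have hs0 : 0 < s := lt_trans (by positivity) hps1'
    have hainvb : a⁻¹ * b = b⁻¹ := by
      rw [← hbb, mul_inv]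
      field_simp
    have hincl : whitneyBox n α₁ss b (y, t) ⊆ whitneyBox n α₁s a (z, s) := by
      rintro ⟨w, τ⟩ hw'
      obtain ⟨hw, hτ1, hτ2⟩ := hw'
      have hw : dist w y < α₁ss * t := hw
      have hτ1 : b⁻¹ * t < τ := hτ1
      have hτ2 : τ < b * t := hτ2
      have h2s : α₁ss * t + α₁ss * t = α₁s * (b⁻¹ * t) := by
        rw [hα₁ss_def, hα₁s_def]
        field_simp
        ring
      refine ⟨?_, ?_, ?_⟩
      · show dist w z < α₁s * s
        calc dist w z ≤ dist w y + dist y z := dist_triangle _ _ _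
          _ < α₁ss * t + α₁ss * t := by rw [dist_comm y z]; linarith
          _ = α₁s * (b⁻¹ * t) := h2s
          _ < α₁s * s := mul_lt_mul_of_pos_left hps1' hα₁s0
      · show a⁻¹ * s < τ
        calc a⁻¹ * s < a⁻¹ * (b * t) := mul_lt_mul_of_pos_left hps2' (inv_pos.mpr ha0)
          _ = b⁻¹ * t := by rw [← mul_assoc, hainvb]
          _ < τ := hτ1
      · show τ < a * s
        have e : a * (b⁻¹ * t) = b * t := by
          rw [← mul_assoc, ← hbb]
          field_simp
        calc τ < b * t := hτ2
          _ = a * (b⁻¹ * t) := e.symm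
          _ < a * s := mul_lt_mul_of_pos_left hps1' ha0
    have hb2 : 2 * b ^ 2 * α₁ss = α₁s * b := by
      rw [hα₁ss_def, hα₁s_def]
      field_simp
    have hRHS : K2 * ((α₁ss * t) ^ n * (b * t - b⁻¹ * t)) =
        (α₁s * (b * t)) ^ n * ((a - a⁻¹) * (b * t)) := by
      have hdiv : (a - a⁻¹) * b / (b - b⁻¹) * ((b - b⁻¹) * t) =
          (a - a⁻¹) * (b * t) := by
        rw [hcancel _ _ _ (ne_of_gt hbb_sub)]; ring
      calc K2 * ((α₁ss * t) ^ n * (b * t - b⁻¹ * t))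
          = (2 * b ^ 2) ^ n * (α₁ss * t) ^ n *
              ((a - a⁻¹) * b / (b - b⁻¹) * ((b - b⁻¹) * t)) := by
            rw [hK2_def]; ring
        _ = ((2 * b ^ 2) * (α₁ss * t)) ^ n * ((a - a⁻¹) * (b * t)) := by
            rw [hdiv, ← mul_pow]
        _ = (α₁s * (b * t)) ^ n * ((a - a⁻¹) * (b * t)) := by
            rw [show 2 * b ^ 2 * (α₁ss * t) = α₁s * (b * t) from by
              rw [← mul_assoc, hb2]; ring]
    have hreal : (α₁s * s) ^ n * (a * s - a⁻¹ * s) ≤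
        K2 * ((α₁ss * t) ^ n * (b * t - b⁻¹ * t)) := by
      rw [show (α₁s * s) ^ n * (a * s - a⁻¹ * s) =
        (α₁s * s) ^ n * ((a - a⁻¹) * s) from by ring, hRHS]
      exact key_ineq n hα₁s0.le haa_sub.le hs0.le hps2'.le
    have hvol : volume (whitneyBox n α₁s a (z, s)) ≤
        ENNReal.ofReal K2 * volume (whitneyBox n α₁ss b (y, t)) := by
      calc volume (whitneyBox n α₁s a (z, s))
          = Bvol * ENNReal.ofReal ((α₁s * s) ^ n * (a * s - a⁻¹ * s)) :=
            volume_whitneyBox n α₁s a z s (by positivity)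
        _ ≤ Bvol * ENNReal.ofReal (K2 * ((α₁ss * t) ^ n * (b * t - b⁻¹ * t))) :=
            mul_le_mul_right (ENNReal.ofReal_le_ofReal hreal) _
        _ = ENNReal.ofReal K2 *
            (Bvol * ENNReal.ofReal ((α₁ss * t) ^ n * (b * t - b⁻¹ * t))) := by
            rw [ENNReal.ofReal_mul hK2pos.le]; ring
        _ = ENNReal.ofReal K2 * volume (whitneyBox n α₁ss b (y, t)) := by
            rw [volume_whitneyBox n α₁ss b y t (by positivity)]
    have hS := volpos α₁ss b y t hα₁ss0 ht hb1
    have hT := volpos α₁s a z s hα₁s0 hs0 ha1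
    have hmain := avg_le_avg (fun w => u w ^ r) hincl hS.1 hS.2 hT.1 hT.2 hvol
    have hstep : whitneyAvg n α₁ss b r u (y, t) ≤
        (ENNReal.ofReal K2) ^ (1/r) * whitneyAvg n α₁s a r u (z, s) := by
      calc whitneyAvg n α₁ss b r u (y, t)
          ≤ (ENNReal.ofReal K2 *
              ((volume (whitneyBox n α₁s a (z, s)))⁻¹ *
                ∫⁻ w in whitneyBox n α₁s a (z, s), u w ^ r)) ^ (1/r) :=
            ENNReal.rpow_le_rpow hmain (by positivity)
        _ = (ENNReal.ofReal K2) ^ (1/r) * whitneyAvg n α₁s a r u (z, s) := by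
            rw [whitneyAvg, ENNReal.mul_rpow_of_nonneg _ _ (by positivity)]
    have hD0 : (ENNReal.ofReal K2) ^ (1/r) ≠ 0 :=
      (ENNReal.rpow_pos (ENNReal.ofReal_pos.mpr hK2pos) ENNReal.ofReal_ne_top).ne'
    have hDtop : (ENNReal.ofReal K2) ^ (1/r) ≠ ⊤ :=
      ENNReal.rpow_ne_top_of_nonneg (by positivity) ENNReal.ofReal_ne_top
    calc ((ENNReal.ofReal K2) ^ (1/r))⁻¹ * whitneyAvg n α₁ss b r u (y, t)
        ≤ ((ENNReal.ofReal K2) ^ (1/r))⁻¹ *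
            ((ENNReal.ofReal K2) ^ (1/r) * whitneyAvg n α₁s a r u (z, s)) := by gcongr
      _ = whitneyAvg n α₁s a r u (z, s) := by
          rw [← mul_assoc, ENNReal.inv_mul_cancel hD0 hDtop, one_mul]
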